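/- For every α ∈ (0, ∞) and every t ∈ (0, 1), the quantity η(t) = t·(2 + (6α−3)t + 4(α²−α)t²)/((1 − t + αt)²(1 + αt)²) + 2·log(1 − t/(1 + αt)) is strictly negative. -/

import Mathlib

lemma log_aux (u : ℝ) (h0 : 0 < u) (h1 : u < 1) :
    Real.log (1 - u) < -(u + u^2/2 + u^3/3 + u^4/4) := by
  set f : ℝ → ℝ := fun x => Real.log (1-x) + (x + x^2/2 + x^3/3 + x^4/4) with hf
  have key : StrictAntiOn f (Set.Ico (0:ℝ) 1) := by
    apply strictAntiOn_of_deriv_neg (convex_Ico 0 1)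
    · apply ContinuousOn.add
      · apply ContinuousOn.log (by fun_prop)
        intro x hx
        simp only [Set.mem_Ico] at hx
        linarith
      · fun_prop
    · intro x hx
      rw [interior_Ico] at hx
      obtain ⟨hx0, hx1⟩ := hx
      have h1x : (0:ℝ) < 1 - x := by linarith
      have hd : HasDerivAt f ((1-x)⁻¹ * (-1) + (1 + x + x^2 + x^3)) x := by
        apply HasDerivAt.add
        · exact (Real.hasDerivAt_log h1x.ne').comp x ((hasDerivAt_id x).const_sub 1)
        · have : HasDerivAt (fun x : ℝ => x + x^2/2 + x^3/3 + x^4/4)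
              (1 + 2*x^(2-1)/2 + 3*x^(3-1)/3 + 4*x^(4-1)/4) x := by
            exact ((((hasDerivAt_id x)).add
              (((hasDerivAt_pow 2 x)).div_const 2)).add
              (((hasDerivAt_pow 3 x)).div_const 3)).add
              (((hasDerivAt_pow 4 x)).div_const 4)
          refine this.congr_deriv ?_
          norm_num
      rw [hd.deriv]
      have : (1-x)⁻¹ * (-1) + (1 + x + x^2 + x^3) = -(x^4/(1-x)) := by
        field_simp
        ring
      rw [this]
      have : 0 < x^4 / (1-x) := by positivity
      linarith
  have h := key ⟨le_refl 0, one_pos⟩ ⟨h0.le, h1⟩ h0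
  have e0 : f 0 = 0 := by norm_num [hf]
  have eu : f u = Real.log (1-u) + (u + u^2/2 + u^3/3 + u^4/4) := rfl
  rw [e0, eu] at h
  linarith

set_option maxHeartbeats 2000000 in
theorem eta_neg (α : ℝ) (hα : α ∈ Set.Ioi (0:ℝ)) (t : ℝ) (ht : t ∈ Set.Ioo (0:ℝ) 1) :
    t * (2 + (6 * α - 3) * t + 4 * (α ^ 2 - α) * t ^ 2) /
        ((1 - t + α * t) ^ 2 * (1 + α * t) ^ 2) +
      2 * Real.log (1 - t / (1 + α * t)) < 0 := by
  have ha : (0:ℝ) < α := hα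
  obtain ⟨ht0, ht1⟩ := ht
  have hs : (0:ℝ) < 1 + α * t := by nlinarith
  have hdpos : (0:ℝ) < 1 - t + α * t := by nlinarith
  set u : ℝ := t / (1 + α * t) with hu
  have hu0 : 0 < u := div_pos ht0 hs
  have hu1 : u < 1 := by
    rw [hu, div_lt_one hs]; nlinarith
  have hlog := log_aux u hu0 hu1
  -- Bernstein coefficient positivity
  have hB0 : 0 < 4*α^2 - 4*α + 4/3 := by nlinarith [sq_nonneg (2*α-1)]
  have hB1 : 0 < 12*α^3 - 2*α^2 - 8*α + 13/3 := by
    nlinarith [mul_nonneg ha.le (sq_nonneg (2*α-1)), sq_nonneg (60*α-33)]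
  have hB2 : 0 < 12*α^4 + 8*α^3 - 12*α^2 - 10/3*α + 4 := by
    nlinarith [sq_nonneg (α^2+α-1), sq_nonneg (6*α^2+2*α-3), mul_nonneg ha.le (sq_nonneg (2*α-1)),
      sq_nonneg (α-1), sq_nonneg α, mul_nonneg (mul_nonneg ha.le ha.le) (sq_nonneg (2*α-1))]
  have hB3 : 0 < 4*α^5 + 6*α^4 - 8/3*α^3 - 17/3*α^2 + 2 := by
    nlinarith [mul_nonneg (mul_nonneg ha.le ha.le) (sq_nonneg (2*α-1)), mul_nonneg ha.le (sq_nonneg (2*α-1)),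
      sq_nonneg (α^2-1), sq_nonneg (3*α^2+2*α-2), mul_nonneg ha.le (sq_nonneg (α^2+α-1)),
      mul_nonneg (mul_nonneg ha.le ha.le) (sq_nonneg (α-1)), sq_nonneg (2*α-1)]
  have h1t : (0:ℝ) < 1 - t := by linarith
  have hR : 0 < (4*α^2 - 4*α + 4/3)*(1-t)^3 + (12*α^3 - 2*α^2 - 8*α + 13/3)*t*(1-t)^2
      + (12*α^4 + 8*α^3 - 12*α^2 - 10/3*α + 4)*t^2*(1-t)
      + (4*α^5 + 6*α^4 - 8/3*α^3 - 17/3*α^2 + 2)*t^3 := by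
    have p0 := mul_pos hB0 (pow_pos h1t 3)
    have p1 := mul_pos (mul_pos hB1 ht0) (pow_pos h1t 2)
    have p2 := mul_pos (mul_pos hB2 (pow_pos ht0 2)) h1t
    have p3 := mul_pos hB3 (pow_pos ht0 3)
    nlinarith [p0, p1, p2, p3]
  have hident : 2*(u + u^2/2 + u^3/3 + u^4/4)
      - t * (2 + (6 * α - 3) * t + 4 * (α ^ 2 - α) * t ^ 2) /
        ((1 - t + α * t) ^ 2 * (1 + α * t) ^ 2)
      = t^3 * ((4*α^2 - 4*α + 4/3)*(1-t)^3 + (12*α^3 - 2*α^2 - 8*α + 13/3)*t*(1-t)^2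
        + (12*α^4 + 8*α^3 - 12*α^2 - 10/3*α + 4)*t^2*(1-t)
        + (4*α^5 + 6*α^4 - 8/3*α^3 - 17/3*α^2 + 2)*t^3)
        / (2 * (1 + α * t)^4 * (1 - t + α * t)^2) := by
    rw [hu]
    field_simp
    ring
  have hkey : t * (2 + (6 * α - 3) * t + 4 * (α ^ 2 - α) * t ^ 2) /
        ((1 - t + α * t) ^ 2 * (1 + α * t) ^ 2) ≤ 2*(u + u^2/2 + u^3/3 + u^4/4) := by
    have hposrhs : 0 ≤ t^3 * ((4*α^2 - 4*α + 4/3)*(1-t)^3 + (12*α^3 - 2*α^2 - 8*α + 13/3)*t*(1-t)^2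
        + (12*α^4 + 8*α^3 - 12*α^2 - 10/3*α + 4)*t^2*(1-t)
        + (4*α^5 + 6*α^4 - 8/3*α^3 - 17/3*α^2 + 2)*t^3)
        / (2 * (1 + α * t)^4 * (1 - t + α * t)^2) := by positivity
    linarith [hident, hposrhs]
  linarith [hkey, hlog]
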